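/- (Invariantization.) Under the Assumption, the invariantization map φ_𝒢 : R → A is well defined (independent of the choice of polynomial representative) and is a homomorphism of R^G-modules; it restricts to the identity on R^G. If in addition R^G_a = A_a holds for some nonzero a ∈ R^G with A ⊆ R_a, then φ_𝒢 extends uniquely to an R_a^G-linear projection R_a ↠ R_a^G, and in particular R_a^G is a direct summand of R_a as an R_a^G-module. -/

import Mathlib

open MvPolynomial
noncomputable section

namespace Derksen

variable {L : Type*} [Field L]

/-- Coefficient-wise action of a group element on a multivariate polynomial
(the variables are fixed). -/
def polyAct (G : Type*) [Group G] [MulSemiringAction G L] {n : ℕ} (σ : G)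
    (f : MvPolynomial (Fin n) L) : MvPolynomial (Fin n) L :=
  MvPolynomial.map (MulSemiringAction.toRingHom G L σ) f

/-- The Derksen ideal `D_{a_1,…,a_n} = ⋂_{σ ∈ G} (y_1 − σ·a_1, …, y_n − σ·a_n)`. -/
def derksenIdeal (G : Type*) [Group G] [MulSemiringAction G L] {n : ℕ}
    (a : Fin n → L) : Ideal (MvPolynomial (Fin n) L) :=
  ⨅ σ : G, Ideal.span (Set.range fun i => X i - C (σ • a i))

/-- The leading monomial of a multivariate polynomial with respect to a
monomial order (it is `0` for the zero polynomial). -/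
def lm {n : ℕ} (m : MonomialOrder (Fin n)) {S : Type*} [CommSemiring S]
    (f : MvPolynomial (Fin n) S) : Fin n →₀ ℕ :=
  m.toSyn.symm (f.support.sup fun d => m.toSyn d)

/-- The leading coefficient with respect to a monomial order. -/
def lc {n : ℕ} (m : MonomialOrder (Fin n)) {S : Type*} [CommSemiring S]
    (f : MvPolynomial (Fin n) S) : S :=
  f.coeff (lm m f)

/-- A (finite) Gröbner basis of an ideal of a polynomial ring over a field,
with respect to a monomial order: it consists of nonzero elements of the ideal,
generates it, and the leading monomial of every nonzero element of the ideal is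
divisible by the leading monomial of some basis element. -/
structure IsGroebnerBasis {n : ℕ} (m : MonomialOrder (Fin n))
    (E : Ideal (MvPolynomial (Fin n) L)) (B : Finset (MvPolynomial (Fin n) L)) : Prop where
  zero_not_mem : (0 : MvPolynomial (Fin n) L) ∉ B
  subset : (B : Set (MvPolynomial (Fin n) L)) ⊆ E
  span_eq : Ideal.span (B : Set (MvPolynomial (Fin n) L)) = E
  lm_dvd : ∀ f ∈ E, f ≠ 0 → ∃ g ∈ B, lm m g ≤ lm m f

/-- A reduced Gröbner basis: all elements are monic and no monomial occurring in
a basis element is divisible by the leading monomial of another basis element. -/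
structure IsReducedGroebnerBasis {n : ℕ} (m : MonomialOrder (Fin n))
    (E : Ideal (MvPolynomial (Fin n) L)) (B : Finset (MvPolynomial (Fin n) L))
    extends IsGroebnerBasis m E B : Prop where
  monic : ∀ g ∈ B, lc m g = 1
  reduced : ∀ g ∈ B, ∀ g' ∈ B, g' ≠ g → ∀ d ∈ g.support, ¬ lm m g' ≤ d

/-- The `K`-subalgebra of `L` (as a subring) generated by the coefficients of
the polynomials of `B`. -/
def coeffAlgebra (K : Subring L) {n : ℕ} (B : Finset (MvPolynomial (Fin n) L)) :
    Subring L :=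
  Subring.closure (↑K ∪ {x : L | ∃ g ∈ B, ∃ d : Fin n →₀ ℕ, coeff d g = x})

end Derksen

namespace Derksen

/-- The localization `S_u = S[u⁻¹]` of a subring `S ⊆ L` at an element `u`,
realized as a subring of `L`. -/
def locAt {L : Type*} [Field L] (S : Subring L) (u : L) : Subring L :=
  Subring.closure (↑S ∪ {u⁻¹})

/-- `f ∈ K[y_1,…,y_n]` represents `b`: all coefficients of `f` lie in `K` and
`f(a_1,…,a_n) = b`. -/
def Represents {L : Type*} [Field L] (K : Subring L) {n : ℕ} (a : Fin n → L)
    (b : L) (f : MvPolynomial (Fin n) L) : Prop :=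
  (∀ d : Fin n →₀ ℕ, coeff d f ∈ K) ∧ eval a f = b

/-- `r` is the normal form of `f` with respect to the Gröbner basis `B`:
`f ≡ r` modulo the ideal generated by `B`, and no monomial occurring in `r` is
divisible by the leading monomial of an element of `B`. -/
def IsNormalForm {L : Type*} [Field L] {n : ℕ} (m : MonomialOrder (Fin n))
    (B : Finset (MvPolynomial (Fin n) L)) (f r : MvPolynomial (Fin n) L) : Prop :=
  f - r ∈ Ideal.span (B : Set (MvPolynomial (Fin n) L)) ∧
    ∀ d ∈ r.support, ∀ g ∈ B, ¬ lm m g ≤ d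

/-- `φ` is the invariantization map `φ_𝒢 : R → A`: for `b ∈ R` written as
`b = f(a_1,…,a_n)` with `f ∈ K[y_1,…,y_n]`, `φ b` is the normal form of `f`
with all variables `y_i` set to zero. -/
def IsInvariantization {L : Type*} [Field L] (K : Subring L) {n : ℕ}
    (a : Fin n → L) (m : MonomialOrder (Fin n))
    (B : Finset (MvPolynomial (Fin n) L)) (φ : L → L) : Prop :=
  ∀ (b : L) (f r : MvPolynomial (Fin n) L), Represents K a b f →
    IsNormalForm m B f r → φ b = eval (0 : Fin n → L) r


section Aux

variable {L : Type*} [Field L] {n : ℕ}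

lemma toSyn_lm (m : MonomialOrder (Fin n)) (f : MvPolynomial (Fin n) L) :
    m.toSyn (lm m f) = f.support.sup fun d => m.toSyn d := by
  simp [lm]

lemma lm_mem_support (m : MonomialOrder (Fin n)) {f : MvPolynomial (Fin n) L} (hf : f ≠ 0) :
    lm m f ∈ f.support := by
  obtain ⟨d, hd, h⟩ := Finset.exists_mem_eq_sup f.support
    (MvPolynomial.support_nonempty.mpr hf) (fun d => m.toSyn d)
  rw [lm, h]
  simpa using hd

lemma le_toSyn_lm (m : MonomialOrder (Fin n)) {f : MvPolynomial (Fin n) L} {d : Fin n →₀ ℕ}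
    (hd : d ∈ f.support) : m.toSyn d ≤ m.toSyn (lm m f) := by
  rw [toSyn_lm]; exact Finset.le_sup hd

lemma nf_unique {m : MonomialOrder (Fin n)} {E : Ideal (MvPolynomial (Fin n) L)}
    {B : Finset (MvPolynomial (Fin n) L)} (hB : IsGroebnerBasis m E B)
    {p q : MvPolynomial (Fin n) L} (hpq : p - q ∈ E)
    (hp : ∀ d ∈ p.support, ∀ g ∈ B, ¬ lm m g ≤ d)
    (hq : ∀ d ∈ q.support, ∀ g ∈ B, ¬ lm m g ≤ d) : p = q := by
  classical
  by_contra hne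
  have h0 : p - q ≠ 0 := sub_ne_zero.mpr hne
  obtain ⟨g, hg, hle⟩ := hB.lm_dvd _ hpq h0
  have hmem := lm_mem_support m h0
  have hsub := MvPolynomial.support_sub (Fin n) p q hmem
  rcases Finset.mem_union.mp hsub with h | h
  · exact hp _ h g hg hle
  · exact hq _ h g hg hle

lemma sub_C_eval_mem_span (c : Fin n → L) (f : MvPolynomial (Fin n) L) :
    f - C (eval c f) ∈ Ideal.span (Set.range fun i => X i - C (c i)) := by
  induction f using MvPolynomial.induction_on with
  | C a => simp
  | add p q hp hq =>
      have h : p + q - C (eval c (p + q)) =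
          (p - C (eval c p)) + (q - C (eval c q)) := by
        rw [map_add, C_add]; ring
      rw [h]; exact add_mem hp hq
  | mul_X p i hp =>
      have h : p * X i - C (eval c (p * X i)) =
          (X i - C (c i)) * p + (p - C (eval c p)) * C (c i) := by
        rw [map_mul, eval_X, C_mul]; ring
      rw [h]
      exact add_mem (Ideal.mul_mem_right _ _ (Ideal.subset_span ⟨i, rfl⟩))
        (Ideal.mul_mem_right _ _ hp)

lemma mem_span_of_eval_eq_zero {c : Fin n → L} {f : MvPolynomial (Fin n) L}
    (hf : eval c f = 0) :
    f ∈ Ideal.span (Set.range fun i => X i - C (c i)) := by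
  have := sub_C_eval_mem_span c f
  rwa [hf, map_zero, sub_zero] at this

lemma eval_smul_eq {G : Type*} [Group G] [MulSemiringAction G L] (σ : G)
    {K : Subring L} (hK : ∀ x ∈ K, σ • x = x) (a : Fin n → L)
    {f : MvPolynomial (Fin n) L} (hf : ∀ d, coeff d f ∈ K) :
    eval (fun i => σ • a i) f = σ • eval a f := by
  have hmap : MvPolynomial.map (MulSemiringAction.toRingHom G L σ) f = f := by
    ext d
    rw [coeff_map, MulSemiringAction.toRingHom_apply]
    exact hK _ (hf d)
  conv_lhs => rw [← hmap]
  rw [eval_map]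
  have h := eval₂_comp_left (MulSemiringAction.toRingHom G L σ) (RingHom.id L) a f
  rw [RingHom.comp_id, eval₂_id] at h
  have hfun : (⇑(MulSemiringAction.toRingHom G L σ) ∘ a) = fun i => σ • a i := by
    funext i; simp [MulSemiringAction.toRingHom_apply]
  rw [hfun] at h
  rw [← h]
  simp [MulSemiringAction.toRingHom_apply]

lemma sub_mem_derksen {G : Type*} [Group G] [MulSemiringAction G L] {K : Subring L}
    (hK : ∀ (σ : G), ∀ x ∈ K, σ • x = x) (a : Fin n → L)
    {f f' : MvPolynomial (Fin n) L} (hf : ∀ d, coeff d f ∈ K) (hf' : ∀ d, coeff d f' ∈ K)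
    (h : eval a f = eval a f') : f - f' ∈ derksenIdeal G a := by
  rw [derksenIdeal, Ideal.mem_iInf]
  intro σ
  apply mem_span_of_eval_eq_zero
  rw [map_sub, eval_smul_eq σ (hK σ) a hf, eval_smul_eq σ (hK σ) a hf', h, sub_self]

lemma sub_C_mem_derksen {G : Type*} [Group G] [MulSemiringAction G L] {K : Subring L}
    (hK : ∀ (σ : G), ∀ x ∈ K, σ • x = x) (a : Fin n → L)
    {f : MvPolynomial (Fin n) L} (hf : ∀ d, coeff d f ∈ K)
    (hinv : ∀ σ : G, σ • eval a f = eval a f) :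
    f - C (eval a f) ∈ derksenIdeal G a := by
  rw [derksenIdeal, Ideal.mem_iInf]
  intro σ
  have h2 := sub_C_eval_mem_span (fun i => σ • a i) f
  rwa [eval_smul_eq σ (hK σ) a hf, hinv σ] at h2

lemma exists_represents {K : Subring L} {a : Fin n → L} {b : L}
    (hb : b ∈ Subring.closure (↑K ∪ Set.range a)) : ∃ f, Represents K a b f := by
  classical
  induction hb using Subring.closure_induction with
  | mem x hx =>
      rcases hx with hx | ⟨i, rfl⟩
      · exact ⟨C x, fun d => by rw [coeff_C]; split <;> [exact hx; exact K.zero_mem],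
          eval_C _⟩
      · refine ⟨X i, fun d => ?_, eval_X _⟩
        rw [coeff_X']
        split <;> [exact K.one_mem; exact K.zero_mem]
  | zero => exact ⟨0, fun d => by simp only [coeff_zero]; exact zero_mem _, by simp⟩
  | one => exact ⟨1, fun d => by rw [← C_1, coeff_C]; split <;> [exact K.one_mem; exact K.zero_mem], by simp⟩
  | add x y hx hy ihx ihy =>
      obtain ⟨f, hfK, hfe⟩ := ihx; obtain ⟨g, hgK, hge⟩ := ihy
      exact ⟨f + g, fun d => by rw [coeff_add]; exact add_mem (hfK d) (hgK d),
        by rw [map_add, hfe, hge]⟩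
  | neg x hx ih =>
      obtain ⟨f, hfK, hfe⟩ := ih
      exact ⟨-f, fun d => by rw [coeff_neg]; exact neg_mem (hfK d), by rw [map_neg, hfe]⟩
  | mul x y hx hy ihx ihy =>
      obtain ⟨f, hfK, hfe⟩ := ihx; obtain ⟨g, hgK, hge⟩ := ihy
      refine ⟨f * g, fun d => ?_, by rw [map_mul, hfe, hge]⟩
      rw [coeff_mul]
      exact sum_mem fun c hc => mul_mem (hfK _) (hgK _)

lemma exists_nf (m : MonomialOrder (Fin n)) (A : Subring L)
    (B : Finset (MvPolynomial (Fin n) L)) (hmonic : ∀ g ∈ B, lc m g = 1)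
    (hBA : ∀ g ∈ B, ∀ d, coeff d g ∈ A) (f : MvPolynomial (Fin n) L)
    (hf : ∀ d, coeff d f ∈ A) :
    ∃ r, (f - r ∈ Ideal.span (B : Set (MvPolynomial (Fin n) L))) ∧
      (∀ d ∈ r.support, ∀ g ∈ B, ¬ lm m g ≤ d) ∧ (∀ d, coeff d r ∈ A) := by
  classical
  suffices H : ∀ s : m.syn, ∀ f : MvPolynomial (Fin n) L,
      (∀ d ∈ f.support, m.toSyn d ≤ s) → (∀ d, coeff d f ∈ A) →
      ∃ r, (f - r ∈ Ideal.span (B : Set (MvPolynomial (Fin n) L))) ∧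
        (∀ d ∈ r.support, ∀ g ∈ B, ¬ lm m g ≤ d) ∧ (∀ d, coeff d r ∈ A) by
    exact H (m.toSyn (lm m f)) f (fun d hd => le_toSyn_lm m hd) hf
  intro s
  induction s using WellFoundedLT.induction with
  | _ s IH =>
  intro f hfs hfA
  by_cases hf0 : f = 0
  · exact ⟨0, by simp [hf0], by simp, fun d => by simp only [coeff_zero]; exact zero_mem _⟩
  have hdsupp : lm m f ∈ f.support := lm_mem_support m hf0
  have hds : m.toSyn (lm m f) ≤ s := hfs _ hdsupp
  have hc : coeff (lm m f) f ≠ 0 := MvPolynomial.mem_support_iff.mp hdsupp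
  by_cases hdvd : ∃ g ∈ B, lm m g ≤ lm m f
  · obtain ⟨g, hg, hgle⟩ := hdvd
    set q : MvPolynomial (Fin n) L :=
      g * monomial (lm m f - lm m g) (coeff (lm m f) f) with hq
    have hqd : coeff (lm m f) q = coeff (lm m f) f := by
      rw [hq, coeff_mul_monomial', if_pos tsub_le_self, tsub_tsub_cancel_of_le hgle]
      have : coeff (lm m g) g = 1 := hmonic g hg
      rw [this, one_mul]
    have hqsupp : ∀ e ∈ q.support, m.toSyn e ≤ m.toSyn (lm m f) := by
      intro e he
      have hne : coeff e q ≠ 0 := MvPolynomial.mem_support_iff.mp he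
      rw [hq, coeff_mul_monomial'] at hne
      by_cases hle : lm m f - lm m g ≤ e
      · rw [if_pos hle] at hne
        have h1 : coeff (e - (lm m f - lm m g)) g ≠ 0 := by
          intro h; rw [h, zero_mul] at hne; exact hne rfl
        have h2 : m.toSyn (e - (lm m f - lm m g)) ≤ m.toSyn (lm m g) :=
          le_toSyn_lm m (MvPolynomial.mem_support_iff.mpr h1)
        have h3 : e = (e - (lm m f - lm m g)) + (lm m f - lm m g) :=
          (tsub_add_cancel_of_le hle).symm
        calc m.toSyn e = m.toSyn (e - (lm m f - lm m g)) + m.toSyn (lm m f - lm m g) := by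
              rw [← map_add, ← h3]
          _ ≤ m.toSyn (lm m g) + m.toSyn (lm m f - lm m g) := by
              exact add_le_add_left h2 _
          _ = m.toSyn (lm m f) := by
              rw [← map_add, add_tsub_cancel_of_le hgle]
      · rw [if_neg hle] at hne; exact absurd rfl hne
    have hqA : ∀ e, coeff e q ∈ A := by
      intro e
      rw [hq, coeff_mul_monomial']
      split
      · exact mul_mem (hBA g hg _) (hfA _)
      · exact zero_mem A
    have hqspan : q ∈ Ideal.span (B : Set (MvPolynomial (Fin n) L)) :=
      Ideal.mul_mem_right _ _ (Ideal.subset_span hg)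
    set f' := f - q with hf'
    have hf'supp : ∀ e ∈ f'.support, m.toSyn e < m.toSyn (lm m f) := by
      intro e he
      have hne : coeff e f' ≠ 0 := MvPolynomial.mem_support_iff.mp he
      have hed : e ≠ lm m f := by
        intro h; subst h
        rw [hf', MvPolynomial.coeff_sub, hqd, sub_self] at hne
        exact hne rfl
      have hle : m.toSyn e ≤ m.toSyn (lm m f) := by
        rw [hf'] at he
        have := MvPolynomial.support_sub (Fin n) f q he
        rcases Finset.mem_union.mp this with h | h
        · exact le_toSyn_lm m h
        · exact hqsupp e h
      exact lt_of_le_of_ne hle (fun h => hed (m.toSyn.injective h))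
    have hf'A : ∀ e, coeff e f' ∈ A := fun e => by
      rw [hf', MvPolynomial.coeff_sub]; exact sub_mem (hfA e) (hqA e)
    obtain ⟨r, hr1, hr2, hr3⟩ : ∃ r,
        (f' - r ∈ Ideal.span (B : Set (MvPolynomial (Fin n) L))) ∧
        (∀ d ∈ r.support, ∀ g ∈ B, ¬ lm m g ≤ d) ∧ (∀ d, coeff d r ∈ A) := by
      by_cases hf'0 : f' = 0
      · exact ⟨0, by simp [hf'0], by simp, fun d => by simp only [coeff_zero]; exact zero_mem _⟩
      · refine IH (m.toSyn (lm m f')) ?_ f' (fun e he => le_toSyn_lm m he) hf'A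
        exact lt_of_lt_of_le (hf'supp _ (lm_mem_support m hf'0)) hds
    refine ⟨r, ?_, hr2, hr3⟩
    have : f - r = q + (f' - r) := by rw [hf']; ring
    rw [this]
    exact add_mem hqspan hr1
  · set q : MvPolynomial (Fin n) L := monomial (lm m f) (coeff (lm m f) f) with hq
    have hqd : coeff (lm m f) q = coeff (lm m f) f := by
      rw [hq, coeff_monomial, if_pos rfl]
    set f' := f - q with hf'
    have hf'supp : ∀ e ∈ f'.support, m.toSyn e < m.toSyn (lm m f) := by
      intro e he
      have hne : coeff e f' ≠ 0 := MvPolynomial.mem_support_iff.mp he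
      have hed : e ≠ lm m f := by
        intro h; subst h
        rw [hf', MvPolynomial.coeff_sub, hqd, sub_self] at hne
        exact hne rfl
      have hle : m.toSyn e ≤ m.toSyn (lm m f) := by
        rw [hf'] at he
        have := MvPolynomial.support_sub (Fin n) f q he
        rcases Finset.mem_union.mp this with h | h
        · exact le_toSyn_lm m h
        · rw [hq] at h
          have := MvPolynomial.support_monomial_subset h
          rw [Finset.mem_singleton] at this
          subst this
          exact le_refl _
      exact lt_of_le_of_ne hle (fun h => hed (m.toSyn.injective h))
    have hf'A : ∀ e, coeff e f' ∈ A := fun e => by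
      rw [hf', MvPolynomial.coeff_sub, hq, coeff_monomial]
      split
      · next h => rw [← h]; exact sub_mem (hfA _) (hfA _)
      · rw [sub_zero]; exact hfA e
    obtain ⟨r', hr1, hr2, hr3⟩ : ∃ r',
        (f' - r' ∈ Ideal.span (B : Set (MvPolynomial (Fin n) L))) ∧
        (∀ d ∈ r'.support, ∀ g ∈ B, ¬ lm m g ≤ d) ∧ (∀ d, coeff d r' ∈ A) := by
      by_cases hf'0 : f' = 0
      · exact ⟨0, by simp [hf'0], by simp, fun d => by simp only [coeff_zero]; exact zero_mem _⟩
      · refine IH (m.toSyn (lm m f')) ?_ f' (fun e he => le_toSyn_lm m he) hf'A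
        exact lt_of_lt_of_le (hf'supp _ (lm_mem_support m hf'0)) hds
    refine ⟨r' + q, ?_, ?_, ?_⟩
    · have : f - (r' + q) = f' - r' := by rw [hf']; ring
      rw [this]; exact hr1
    · intro e he g hg hgle
      have := MvPolynomial.support_add he
      rcases Finset.mem_union.mp this with h | h
      · exact hr2 e h g hg hgle
      · rw [hq] at h
        have := MvPolynomial.support_monomial_subset h
        rw [Finset.mem_singleton] at this
        subst this
        exact hdvd ⟨g, hg, hgle⟩
    · intro e
      rw [coeff_add, hq, coeff_monomial]
      split
      · next h => rw [← h]; exact add_mem (hr3 _) (hfA _)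
      · rw [add_zero]; exact hr3 e

lemma mem_locAt_iff {S : Subring L} {u : L} (huS : u ∈ S) (hu : u ≠ 0) {x : L} :
    x ∈ locAt S u ↔ ∃ b ∈ S, ∃ k : ℕ, x * u ^ k = b := by
  constructor
  · intro hx
    induction hx using Subring.closure_induction with
    | mem y hy =>
        rcases hy with hy | hy
        · exact ⟨y, hy, 0, by simp⟩
        · rw [Set.mem_singleton_iff] at hy
          subst hy
          exact ⟨1, one_mem S, 1, by simp [inv_mul_cancel₀ hu]⟩
    | zero => exact ⟨0, zero_mem S, 0, by simp⟩
    | one => exact ⟨1, one_mem S, 0, by simp⟩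
    | add x y hx hy ihx ihy =>
        obtain ⟨b, hb, k, hk⟩ := ihx; obtain ⟨c, hc, j, hj⟩ := ihy
        refine ⟨b * u ^ j + c * u ^ k, add_mem (mul_mem hb (pow_mem huS j))
          (mul_mem hc (pow_mem huS k)), k + j, ?_⟩
        rw [← hk, ← hj]; ring
    | neg x hx ih =>
        obtain ⟨b, hb, k, hk⟩ := ih
        exact ⟨-b, neg_mem hb, k, by rw [← hk]; ring⟩
    | mul x y hx hy ihx ihy =>
        obtain ⟨b, hb, k, hk⟩ := ihx; obtain ⟨c, hc, j, hj⟩ := ihy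
        refine ⟨b * c, mul_mem hb hc, k + j, ?_⟩
        rw [← hk, ← hj]; ring
  · rintro ⟨b, hb, k, hk⟩
    have hx : x = b * (u⁻¹) ^ k := by
      rw [← hk, mul_assoc, ← mul_pow, mul_inv_cancel₀ hu, one_pow, mul_one]
    rw [hx, locAt]
    have h1 : u⁻¹ ∈ Subring.closure (↑S ∪ {u⁻¹}) := Subring.subset_closure (Or.inr rfl)
    have h2 : b ∈ Subring.closure (↑S ∪ {u⁻¹}) := Subring.subset_closure (Or.inl hb)
    exact mul_mem h2 (pow_mem h1 k)

end Aux

/-- **Invariantization.** The invariantization map `φ_𝒢` is a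
well-defined homomorphism of `R^G`-modules with values in `A`, restricting to the
identity on `R^G`.  If `R^G_{a₀} = A_{a₀}` holds for a nonzero invariant
`a₀ ∈ R^G` with `A ⊆ R_{a₀}`, then `φ_𝒢` extends uniquely to an
`R_{a₀}^G`-linear projection `R_{a₀} ↠ R_{a₀}^G`; in particular `R_{a₀}^G` is a
direct summand of `R_{a₀}` as an `R_{a₀}^G`-module. -/
theorem statement3 {L G : Type*} [Field L] [Group G] [MulSemiringAction G L]
    {n : ℕ} (K : Subring L) (a : Fin n → L)
    (hK : ∀ (σ : G), ∀ x ∈ K, σ • x = x)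
    (R : Subring L) (hR : R = Subring.closure (↑K ∪ Set.range a))
    (hRstable : ∀ (σ : G), ∀ x ∈ R, σ • x ∈ R)
    (hQuot : ∀ x : L, ∃ r ∈ R, ∃ s ∈ R, s ≠ 0 ∧ x = r / s)
    (E : Ideal (MvPolynomial (Fin n) L))
    (hEproper : E ≠ ⊤)
    (hDE : derksenIdeal G a ≤ E)
    (hEstable : ∀ (σ : G), ∀ f ∈ E, polyAct G σ f ∈ E)
    (m : MonomialOrder (Fin n)) (B : Finset (MvPolynomial (Fin n) L))
    (hB : IsReducedGroebnerBasis m E B) :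
    -- the map is well defined …
    (∀ (b : L) (f f' r r' : MvPolynomial (Fin n) L),
      Represents K a b f → Represents K a b f' →
      IsNormalForm m B f r → IsNormalForm m B f' r' →
      eval (0 : Fin n → L) r = eval (0 : Fin n → L) r') ∧
    -- … and exists,
    (∃ φ : L → L, IsInvariantization K a m B φ) ∧
    -- and any invariantization map has the stated properties:
    ∀ φ : L → L, IsInvariantization K a m B φ →
      ((∀ b ∈ R, φ b ∈ coeffAlgebra K B) ∧
       (∀ b ∈ R, ∀ c ∈ R, φ (b + c) = φ b + φ c) ∧
       (∀ c ∈ R, ∀ b ∈ R, (∀ σ : G, σ • c = c) → φ (c * b) = c * φ b) ∧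
       (∀ b ∈ R, (∀ σ : G, σ • b = b) → φ b = b) ∧
       -- unique extension to an `R_{a₀}^G`-linear projection of `R_{a₀}` onto `R_{a₀}^G`
       (∀ a₀ : L, a₀ ∈ R → (∀ σ : G, σ • a₀ = a₀) → a₀ ≠ 0 →
         (coeffAlgebra K B : Set L) ⊆ ↑(locAt R a₀) →
         locAt (R ⊓ (FixedPoints.subfield G L).toSubring) a₀ =
           locAt (coeffAlgebra K B) a₀ →
         ∃! ψ : ↥(locAt R a₀) → L,
           (∀ u v : ↥(locAt R a₀), ψ (u + v) = ψ u + ψ v) ∧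
           (∀ c u : ↥(locAt R a₀),
             (c : L) ∈ locAt (R ⊓ (FixedPoints.subfield G L).toSubring) a₀ →
             ψ (c * u) = (c : L) * ψ u) ∧
           (∀ u : ↥(locAt R a₀),
             ψ u ∈ locAt (R ⊓ (FixedPoints.subfield G L).toSubring) a₀) ∧
           (∀ u : ↥(locAt R a₀),
             (u : L) ∈ locAt (R ⊓ (FixedPoints.subfield G L).toSubring) a₀ →
             ψ u = u) ∧
           (∀ (b : L) (hb : b ∈ R) (hb' : b ∈ locAt R a₀), ψ ⟨b, hb'⟩ = φ b))) := by
  classical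
  have hspan : Ideal.span (B : Set (MvPolynomial (Fin n) L)) = E := hB.span_eq
  have wd : ∀ (b : L) (f f' r r' : MvPolynomial (Fin n) L),
      Represents K a b f → Represents K a b f' →
      IsNormalForm m B f r → IsNormalForm m B f' r' →
      eval (0 : Fin n → L) r = eval (0 : Fin n → L) r' := by
    intro b f f' r r' hrf hrf' hnf hnf'
    have hff' : f - f' ∈ E :=
      hDE (sub_mem_derksen hK a hrf.1 hrf'.1 (hrf.2.trans hrf'.2.symm))
    have h1 : f - r ∈ E := by rw [← hspan]; exact hnf.1
    have h2 : f' - r' ∈ E := by rw [← hspan]; exact hnf'.1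
    have hrr' : r - r' ∈ E := by
      have heq : r - r' = ((f - f') + (f' - r')) - (f - r) := by ring
      rw [heq]
      exact sub_mem (add_mem hff' h2) h1
    rw [nf_unique hB.toIsGroebnerBasis hrr' hnf.2 hnf'.2]
  refine ⟨wd, ?_, ?_⟩
  · have hex : ∀ b : L, ∃ v : L, ∀ f r, Represents K a b f → IsNormalForm m B f r →
        v = eval (0 : Fin n → L) r := by
      intro b
      by_cases h : ∃ f r, Represents K a b f ∧ IsNormalForm m B f r
      · obtain ⟨f, r, hrep, hnf⟩ := h
        exact ⟨eval (0 : Fin n → L) r,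
          fun f' r' hrep' hnf' => wd b f f' r r' hrep hrep' hnf hnf'⟩
      · exact ⟨0, fun f r hrep hnf => absurd ⟨f, r, hrep, hnf⟩ h⟩
    exact ⟨fun b => (hex b).choose, fun b f r hrep hnf => (hex b).choose_spec f r hrep hnf⟩
  intro φ hφ
  set A := coeffAlgebra K B with hA
  have hKA : ∀ x ∈ K, x ∈ A := fun x hx => Subring.subset_closure (Or.inl hx)
  have hBA : ∀ g ∈ B, ∀ d, coeff d g ∈ A := fun g hg d =>
    Subring.subset_closure (Or.inr ⟨g, hg, d, rfl⟩)
  have hrepex : ∀ b ∈ R, ∃ f, Represents K a b f := fun b hb =>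
    exists_represents (by rw [hR] at hb; exact hb)
  have hnfex : ∀ f : MvPolynomial (Fin n) L, (∀ d, coeff d f ∈ K) →
      ∃ r, IsNormalForm m B f r ∧ ∀ d, coeff d r ∈ A := by
    intro f hf
    obtain ⟨r, h1, h2, h3⟩ := exists_nf m A B hB.monic hBA f (fun d => hKA _ (hf d))
    exact ⟨r, ⟨h1, h2⟩, h3⟩
  have hCred : ∀ (c : L), ∀ d ∈ (C c : MvPolynomial (Fin n) L).support,
      ∀ g ∈ B, ¬ lm m g ≤ d := by
    intro c d hd g hg hle
    have hd0 : d = 0 := by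
      have hne : coeff d (C c : MvPolynomial (Fin n) L) ≠ 0 :=
        MvPolynomial.mem_support_iff.mp hd
      rw [coeff_C] at hne
      by_contra h
      rw [if_neg (fun h0 => h h0.symm)] at hne
      exact hne rfl
    subst hd0
    have hg0 : g ≠ 0 := fun h => hB.zero_not_mem (h ▸ hg)
    have hlm0 : lm m g = 0 := by
      apply Finsupp.ext
      intro i
      exact Nat.le_zero.mp (hle i)
    have hsupp0 : ∀ e ∈ g.support, e = 0 := by
      intro e he
      have h1 : m.toSyn e ≤ m.toSyn (lm m g) := le_toSyn_lm m he
      rw [hlm0, map_zero] at h1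
      have h2 : m.toSyn e = 0 := m.eq_zero_iff.mpr h1
      have h3 : m.toSyn e = m.toSyn 0 := by rw [h2, map_zero]
      exact m.toSyn.injective h3
    have hgC : g = C (coeff 0 g) := by
      ext e
      rw [coeff_C]
      by_cases he : e = 0
      · subst he; rw [if_pos rfl]
      · rw [if_neg (fun h0 => he h0.symm)]
        by_contra hne
        exact he (hsupp0 e (MvPolynomial.mem_support_iff.mpr hne))
    have hc0 : coeff 0 g ≠ 0 := fun h => hg0 (by rw [hgC, h, map_zero])
    have hmemE : (C (coeff 0 g) : MvPolynomial (Fin n) L) ∈ E := by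
      rw [← hgC]; exact hB.subset hg
    have hone : (1 : MvPolynomial (Fin n) L) ∈ E := by
      have h4 := E.mul_mem_right (C (coeff 0 g)⁻¹) hmemE
      rwa [← C_mul, mul_inv_cancel₀ hc0, C_1] at h4
    exact hEproper ((Ideal.eq_top_iff_one E).mpr hone)
  have P1 : ∀ b ∈ R, φ b ∈ A := by
    intro b hb
    obtain ⟨f, hf⟩ := hrepex b hb
    obtain ⟨r, hnf, hrA⟩ := hnfex f hf.1
    rw [hφ b f r hf hnf, eval_zero, constantCoeff_eq]
    exact hrA 0
  have P2 : ∀ b ∈ R, ∀ c ∈ R, φ (b + c) = φ b + φ c := by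
    intro b hb c hc
    obtain ⟨f, hf⟩ := hrepex b hb
    obtain ⟨f', hf'⟩ := hrepex c hc
    obtain ⟨r, hnf, -⟩ := hnfex f hf.1
    obtain ⟨r', hnf', -⟩ := hnfex f' hf'.1
    have hrep2 : Represents K a (b + c) (f + f') :=
      ⟨fun d => by rw [coeff_add]; exact add_mem (hf.1 d) (hf'.1 d),
       by rw [map_add, hf.2, hf'.2]⟩
    have hnf2 : IsNormalForm m B (f + f') (r + r') := by
      constructor
      · have heq : f + f' - (r + r') = (f - r) + (f' - r') := by ring
        rw [heq]; exact add_mem hnf.1 hnf'.1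
      · intro d hd g hg hle
        rcases Finset.mem_union.mp (MvPolynomial.support_add hd) with h | h
        · exact hnf.2 d h g hg hle
        · exact hnf'.2 d h g hg hle
    rw [hφ _ _ _ hrep2 hnf2, hφ _ _ _ hf hnf, hφ _ _ _ hf' hnf', map_add]
  have P3 : ∀ c ∈ R, ∀ b ∈ R, (∀ σ : G, σ • c = c) → φ (c * b) = c * φ b := by
    intro c hc b hb hcinv
    obtain ⟨fc, hfc⟩ := hrepex c hc
    obtain ⟨fb, hfb⟩ := hrepex b hb
    obtain ⟨rb, hnfb, -⟩ := hnfex fb hfb.1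
    have hrep : Represents K a (c * b) (fc * fb) :=
      ⟨fun d => by rw [coeff_mul]; exact sum_mem fun x hx => mul_mem (hfc.1 _) (hfb.1 _),
       by rw [map_mul, hfc.2, hfb.2]⟩
    have hmemD : fc - C c ∈ derksenIdeal G a := by
      have h5 := sub_C_mem_derksen hK a hfc.1 (fun σ => by rw [hfc.2]; exact hcinv σ)
      rwa [hfc.2] at h5
    have hnf : IsNormalForm m B (fc * fb) (C c * rb) := by
      constructor
      · rw [hspan]
        have heq : fc * fb - C c * rb = (fc - C c) * fb + C c * (fb - rb) := by ring
        rw [heq]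
        refine add_mem (Ideal.mul_mem_right _ _ (hDE hmemD)) (Ideal.mul_mem_left _ _ ?_)
        rw [← hspan]; exact hnfb.1
      · intro d hd g hg hle
        have hsub : d ∈ rb.support := by
          have h1 : ((C c * rb : MvPolynomial (Fin n) L)).support ⊆ rb.support := by
            rw [C_mul']; exact MvPolynomial.support_smul
          exact h1 hd
        exact hnfb.2 d hsub g hg hle
    rw [hφ _ _ _ hrep hnf, hφ _ _ _ hfb hnfb, map_mul, eval_C]
  have P4 : ∀ b ∈ R, (∀ σ : G, σ • b = b) → φ b = b := by
    intro b hb hbinv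
    obtain ⟨f, hf⟩ := hrepex b hb
    have hmemD : f - C b ∈ derksenIdeal G a := by
      have h5 := sub_C_mem_derksen hK a hf.1 (fun σ => by rw [hf.2]; exact hbinv σ)
      rwa [hf.2] at h5
    have hnf : IsNormalForm m B f (C b) := by
      refine ⟨?_, hCred b⟩
      rw [hspan]; exact hDE hmemD
    rw [hφ _ _ _ hf hnf, eval_C]
  refine ⟨P1, P2, P3, P4, ?_⟩
  intro a₀ ha₀R ha₀inv ha₀ne hAsub hEq
  have hFixIff : ∀ x : L, x ∈ (FixedPoints.subfield G L).toSubring ↔ ∀ σ : G, σ • x = x := by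
    intro x
    rw [Subfield.mem_toSubring]
    exact Iff.rfl
  have ha₀RG : a₀ ∈ R ⊓ (FixedPoints.subfield G L).toSubring :=
    ⟨ha₀R, (hFixIff a₀).mpr ha₀inv⟩
  have rep : ∀ u : ↥(locAt R a₀), ∃ p : L × ℕ, p.1 ∈ R ∧ (u : L) * a₀ ^ p.2 = p.1 := by
    intro u
    obtain ⟨b, hb, k, hk⟩ := (mem_locAt_iff ha₀R ha₀ne).mp u.2
    exact ⟨(b, k), hb, hk⟩
  have hpowinv : ∀ j : ℕ, ∀ σ : G, σ • (a₀ ^ j) = a₀ ^ j := fun j σ => by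
    rw [smul_pow', ha₀inv σ]
  have hφpow : ∀ (j : ℕ) (b : L), b ∈ R → φ (b * a₀ ^ j) = a₀ ^ j * φ b := by
    intro j b hb
    rw [mul_comm]
    exact P3 _ (pow_mem ha₀R j) b hb (hpowinv j)
  set ψ : ↥(locAt R a₀) → L :=
    fun u => φ (rep u).choose.1 * (a₀ ^ (rep u).choose.2)⁻¹ with hψdef
  have hkey : ∀ (b b' : L), b ∈ R → b' ∈ R → ∀ (k k' : ℕ) (x : L),
      x * a₀ ^ k = b → x * a₀ ^ k' = b' →
      φ b * (a₀ ^ k)⁻¹ = φ b' * (a₀ ^ k')⁻¹ := by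
    intro b b' hb hb' k k' x hk hk'
    have hbb : b * a₀ ^ k' = b' * a₀ ^ k := by rw [← hk, ← hk']; ring
    have h1 : φ (b * a₀ ^ k') = a₀ ^ k' * φ b := hφpow k' b hb
    have h2 : φ (b' * a₀ ^ k) = a₀ ^ k * φ b' := hφpow k b' hb'
    have h3 : a₀ ^ k' * φ b = a₀ ^ k * φ b' := by rw [← h1, ← h2, hbb]
    have hknz : (a₀ : L) ^ k ≠ 0 := pow_ne_zero _ ha₀ne
    have hk'nz : (a₀ : L) ^ k' ≠ 0 := pow_ne_zero _ ha₀ne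
    field_simp
    linear_combination h3
  have hW : ∀ (u : ↥(locAt R a₀)) (b : L), b ∈ R → ∀ k : ℕ,
      (u : L) * a₀ ^ k = b → ψ u = φ b * (a₀ ^ k)⁻¹ := by
    intro u b hb k hk
    obtain ⟨hp1, hp2⟩ := (rep u).choose_spec
    exact hkey _ _ hp1 hb _ _ _ hp2 hk
  refine ⟨ψ, ⟨?_, ?_, ?_, ?_, ?_⟩, ?_⟩
  · -- additivity
    intro u v
    obtain ⟨b, hb, k, hk⟩ := (mem_locAt_iff ha₀R ha₀ne).mp u.2
    obtain ⟨b', hb', j, hj⟩ := (mem_locAt_iff ha₀R ha₀ne).mp v.2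
    have hmem : b * a₀ ^ j + b' * a₀ ^ k ∈ R :=
      add_mem (mul_mem hb (pow_mem ha₀R j)) (mul_mem hb' (pow_mem ha₀R k))
    have hsum : ((u + v : ↥(locAt R a₀)) : L) * a₀ ^ (k + j)
        = b * a₀ ^ j + b' * a₀ ^ k := by
      push_cast
      rw [← hk, ← hj]; ring
    rw [hW _ _ hmem _ hsum, hW u b hb k hk, hW v b' hb' j hj,
      P2 _ (mul_mem hb (pow_mem ha₀R j)) _ (mul_mem hb' (pow_mem ha₀R k)),
      hφpow j b hb, hφpow k b' hb']
    have hknz : (a₀ : L) ^ k ≠ 0 := pow_ne_zero _ ha₀ne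
    have hjnz : (a₀ : L) ^ j ≠ 0 := pow_ne_zero _ ha₀ne
    field_simp
    ring
  · -- linearity
    intro c u hcRG
    obtain ⟨c₀, hc₀, j, hj⟩ := (mem_locAt_iff ha₀RG ha₀ne).mp hcRG
    obtain ⟨b, hb, k, hk⟩ := (mem_locAt_iff ha₀R ha₀ne).mp u.2
    have hc₀R : c₀ ∈ R := hc₀.1
    have hc₀inv : ∀ σ : G, σ • c₀ = c₀ := (hFixIff c₀).mp hc₀.2
    have hprod : ((c * u : ↥(locAt R a₀)) : L) * a₀ ^ (j + k) = c₀ * b := by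
      push_cast
      rw [← hj, ← hk]; ring
    rw [hW _ _ (mul_mem hc₀R hb) _ hprod, hW u b hb k hk,
      P3 c₀ hc₀R b hb hc₀inv]
    have hjnz : (a₀ : L) ^ j ≠ 0 := pow_ne_zero _ ha₀ne
    have hc : (c : L) = c₀ * (a₀ ^ j)⁻¹ := (eq_mul_inv_iff_mul_eq₀ hjnz).mpr hj
    rw [hc, pow_add, mul_inv]
    ring
  · -- values in RG₀
    intro u
    obtain ⟨b, hb, k, hk⟩ := (mem_locAt_iff ha₀R ha₀ne).mp u.2
    rw [hW u b hb k hk, hEq]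
    have h1 : φ b ∈ Subring.closure (↑A ∪ {a₀⁻¹}) :=
      Subring.subset_closure (Or.inl (P1 b hb))
    have h2 : a₀⁻¹ ∈ Subring.closure (↑A ∪ {a₀⁻¹}) :=
      Subring.subset_closure (Or.inr rfl)
    have h3 : (a₀ ^ k)⁻¹ = (a₀⁻¹) ^ k := by rw [inv_pow]
    rw [h3]
    show φ b * (a₀⁻¹) ^ k ∈ Subring.closure (↑A ∪ {a₀⁻¹})
    exact mul_mem h1 (pow_mem h2 k)
  · -- identity on RG₀
    intro u hu
    obtain ⟨c₀, hc₀, j, hj⟩ := (mem_locAt_iff ha₀RG ha₀ne).mp hu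
    rw [hW u c₀ hc₀.1 j hj, P4 c₀ hc₀.1 ((hFixIff c₀).mp hc₀.2), ← hj]
    exact mul_inv_cancel_right₀ (pow_ne_zero j ha₀ne) _
  · -- restriction to R
    intro b hb hb'
    have h0 : ((⟨b, hb'⟩ : ↥(locAt R a₀)) : L) * a₀ ^ 0 = b := by simp
    rw [hW ⟨b, hb'⟩ b hb 0 h0]
    simp
  · -- uniqueness
    intro ψ' hψ'
    obtain ⟨hadd, hlin, hval, hid, hres⟩ := hψ'
    funext u
    obtain ⟨b, hb, k, hk⟩ := (mem_locAt_iff ha₀R ha₀ne).mp u.2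
    have hcmem : (a₀ ^ k)⁻¹ ∈ locAt R a₀ := by
      have h2 : a₀⁻¹ ∈ Subring.closure ((R : Set L) ∪ {a₀⁻¹}) :=
        Subring.subset_closure (Or.inr rfl)
      have h3 : (a₀ ^ k)⁻¹ = (a₀⁻¹) ^ k := by rw [inv_pow]
      rw [h3]
      show (a₀⁻¹) ^ k ∈ Subring.closure ((R : Set L) ∪ {a₀⁻¹})
      exact pow_mem h2 k
    have hcRG : (a₀ ^ k)⁻¹ ∈
        locAt (R ⊓ (FixedPoints.subfield G L).toSubring) a₀ := by
      have h2 : a₀⁻¹ ∈ Subring.closure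
          ((↑(R ⊓ (FixedPoints.subfield G L).toSubring) : Set L) ∪ {a₀⁻¹}) :=
        Subring.subset_closure (Or.inr rfl)
      have h3 : (a₀ ^ k)⁻¹ = (a₀⁻¹) ^ k := by rw [inv_pow]
      rw [h3]
      show (a₀⁻¹) ^ k ∈ Subring.closure
        ((↑(R ⊓ (FixedPoints.subfield G L).toSubring) : Set L) ∪ {a₀⁻¹})
      exact pow_mem h2 k
    have hbloc : b ∈ locAt R a₀ := Subring.subset_closure (Or.inl hb)
    have hu : u = (⟨(a₀ ^ k)⁻¹, hcmem⟩ : ↥(locAt R a₀)) * ⟨b, hbloc⟩ := by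
      apply Subtype.ext
      push_cast
      rw [← hk]
      field_simp
    rw [hu, hlin ⟨(a₀ ^ k)⁻¹, hcmem⟩ ⟨b, hbloc⟩ hcRG, hres b hb hbloc]
    have hW2 := hW u b hb k hk
    rw [hu] at hW2
    rw [hW2]
    ring

end Derksen
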